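/- Let A ∈ ℝ^{n×n} be symmetric positive semidefinite with A_{ij} < 0 for all i ≠ j, and suppose A is nonsingular (rank(A) = n). Then every entry of A⁻¹ is positive. -/

import Mathlib

open Matrix

/-- If `A ⪰ 0` has all off-diagonal entries negative and is
nonsingular, then every entry of `A⁻¹` is positive. -/
theorem stmt18 (n : ℕ) (A : Matrix (Fin n) (Fin n) ℝ) (hA : A.PosSemidef)
    (hneg : ∀ i j, i ≠ j → A i j < 0) (hinv : IsUnit A.det) :
    ∀ i j, 0 < A⁻¹ i j := by
  intro i j
  -- the j-th column of A⁻¹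
  set x : Fin n → ℝ := fun k => A⁻¹ k j with hx
  have hAx : A *ᵥ x = Pi.single j 1 := by
    have h1 : A * A⁻¹ = 1 := Matrix.mul_nonsing_inv A hinv
    have h2 : A *ᵥ (A⁻¹ *ᵥ Pi.single j 1) = Pi.single j 1 := by
      rw [Matrix.mulVec_mulVec, h1, Matrix.one_mulVec]
    convert h2 using 2
    ext k
    simp [hx, Matrix.mulVec_single]
  -- positive and negative parts
  set u : Fin n → ℝ := fun k => max (-(x k)) 0 with hu
  set v : Fin n → ℝ := fun k => max (x k) 0 with hv
  have hu0 : ∀ k, 0 ≤ u k := fun k => le_max_right _ _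
  have hv0 : ∀ k, 0 ≤ v k := fun k => le_max_right _ _
  have hxuv : ∀ k, x k = v k - u k := fun k => (max_zero_sub_eq_self (x k)).symm
  have huv : ∀ k, u k * v k = 0 := by
    intro k
    rcases le_or_gt (x k) 0 with h | h
    · have : v k = 0 := max_eq_right h
      simp [this]
    · have : u k = 0 := max_eq_right (by linarith)
      simp [this]
  -- u ⬝ A x ≥ 0
  have h1 : 0 ≤ u ⬝ᵥ (A *ᵥ x) := by
    rw [hAx]
    rw [dotProduct]
    apply Finset.sum_nonneg
    intro k _
    rcases eq_or_ne k j with rfl | hk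
    · simpa using mul_nonneg (hu0 k) zero_le_one
    · simp [Pi.single_apply, hk]
  -- u ⬝ A v ≤ 0
  have h2 : u ⬝ᵥ (A *ᵥ v) ≤ 0 := by
    rw [dotProduct]
    apply Finset.sum_nonpos
    intro k _
    rw [mulVec, dotProduct, Finset.mul_sum]
    apply Finset.sum_nonpos
    intro l _
    rcases eq_or_ne k l with rfl | hkl
    · rw [show u k * (A k k * v k) = A k k * (u k * v k) by ring, huv k, mul_zero]
    · have hA' := hneg k l hkl
      nlinarith [mul_nonneg (hu0 k) (hv0 l)]
  -- hence u ⬝ A u ≤ 0, so by PSD it's zero, so A u = 0, so u = 0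
  have h3 : u ⬝ᵥ (A *ᵥ u) ≤ 0 := by
    have : u ⬝ᵥ (A *ᵥ x) = u ⬝ᵥ (A *ᵥ v) - u ⬝ᵥ (A *ᵥ u) := by
      have hxv : x = fun k => v k - u k := funext hxuv
      rw [hxv]
      rw [show (fun k => v k - u k) = v - u from rfl, mulVec_sub, dotProduct_sub]
    linarith
  have h4 : u ⬝ᵥ (A *ᵥ u) = 0 := le_antisymm h3 (by simpa using hA.dotProduct_mulVec_nonneg u)
  have h5 : A *ᵥ u = 0 := by
    have := (hA.dotProduct_mulVec_zero_iff u).mp (by simpa using h4)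
    simpa using this
  have h6 : u = 0 := by
    have : A⁻¹ *ᵥ (A *ᵥ u) = u := by
      rw [Matrix.mulVec_mulVec, Matrix.nonsing_inv_mul A hinv, Matrix.one_mulVec]
    rw [h5, Matrix.mulVec_zero] at this
    exact this.symm
  -- so x ≥ 0
  have hx0 : ∀ k, 0 ≤ x k := by
    intro k
    have h : max (-(x k)) 0 = 0 := congrFun h6 k
    have h' : -(x k) ≤ 0 := by rw [← h]; exact le_max_left _ _
    linarith
  -- strict positivity
  by_contra hle
  push_neg at hle
  have hxi : x i = 0 := le_antisymm hle (hx0 i)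
  -- entries A i k * x k for k ≠ i are ≤ 0
  have hterm : ∀ k, k ≠ i → A i k * x k ≤ 0 := fun k hk =>
    mul_nonpos_of_nonpos_of_nonneg (hneg i k (Ne.symm hk)).le (hx0 k)
  have hAxi : (A *ᵥ x) i = ∑ k, A i k * x k := rfl
  rcases eq_or_ne i j with rfl | hij
  · -- (Ax)_i = 1 but sum is ≤ 0
    have h1' : (A *ᵥ x) i = 1 := by rw [hAx]; simp
    have hsum : ∑ k, A i k * x k ≤ 0 := by
      apply Finset.sum_nonpos
      intro k _
      rcases eq_or_ne k i with rfl | hk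
      · simp [hxi]
      · exact hterm k hk
    rw [hAxi] at h1'
    linarith
  · -- (Ax)_i = 0, forces all x k = 0 for k ≠ i, hence x = 0, contradicting (Ax)_j = 1
    have h0' : (A *ᵥ x) i = 0 := by rw [hAx]; simp [Pi.single_apply, hij]
    rw [hAxi] at h0'
    have hall : ∀ k ∈ Finset.univ, A i k * x k = 0 := by
      apply (Finset.sum_eq_zero_iff_of_nonpos ?_).mp h0'
      · intro k _
        rcases eq_or_ne k i with rfl | hk
        · simp [hxi]
        · exact hterm k hk
    have hxk : ∀ k, x k = 0 := by
      intro k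
      rcases eq_or_ne k i with rfl | hk
      · exact hxi
      · have := hall k (Finset.mem_univ k)
        have hAik := hneg i k (Ne.symm hk)
        rcases mul_eq_zero.mp this with h | h
        · exact absurd h hAik.ne
        · exact h
    have : (A *ᵥ x) j = 1 := by rw [hAx]; simp
    have hx0' : x = 0 := funext hxk
    rw [hx0'] at this
    simp at this
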